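/- Let 1 < q < 2, c > 0, b ≥ 0, and v ∈ ℝ^d, and consider minimizing the strictly convex function w ↦ −wᵀv + (c/2)‖w‖_q² + b‖w‖₁ over w ∈ ℝ^d. Then the minimizer w satisfies: w_i = 0 whenever |v_i| ≤ b, and w_i = sign(v_i) · ( a·(|v_i| − b) )^{1/(q−1)} whenever |v_i| > b, where a = ( (1/c) · ( ∑_{i : |v_i| > b} (|v_i| − b)^{q/(q−1)} )^{(q−2)/q} )^{q−1} (with w = 0 when the set {i : |v_i| > b} is empty). -/

import Mathlib

set_option maxHeartbeats 1000000

/-- Equality case of Young's inequality. -/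
lemma young_eq_aux {p q x y : ℝ} (hpq : Real.HolderConjugate p q)
    (hx : 0 ≤ x) (hy : 0 ≤ y) (h : x ^ p / p + y ^ q / q = x * y) :
    x ^ p = y ^ q := by
  rcases eq_or_lt_of_le hx with hx0 | hx0
  · rw [← hx0, Real.zero_rpow hpq.ne_zero] at h ⊢
    rw [zero_div, zero_add, zero_mul, div_eq_zero_iff] at h
    rcases h with h | h
    · exact h.symm
    · exact absurd h hpq.symm.ne_zero
  rcases eq_or_lt_of_le hy with hy0 | hy0
  · rw [← hy0, Real.zero_rpow hpq.symm.ne_zero] at h ⊢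
    rw [zero_div, add_zero, mul_zero, div_eq_zero_iff] at h
    rcases h with h | h
    · exact h
    · exact absurd h hpq.ne_zero
  -- both positive
  have hyq1 : (0:ℝ) < y ^ (q - 1) := Real.rpow_pos_of_pos hy0 _
  set t : ℝ := x / y ^ (q - 1) with ht_def
  have ht0 : 0 < t := div_pos hx0 hyq1
  have hxt : x = t * y ^ (q - 1) := by rw [ht_def, div_mul_cancel₀ _ hyq1.ne']
  have hyq0 : (0:ℝ) < y ^ q := Real.rpow_pos_of_pos hy0 _
  have hp0 : 0 < p := hpq.pos
  have hxp : x ^ p = t ^ p * y ^ q := by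
    rw [hxt, Real.mul_rpow ht0.le hyq1.le, ← Real.rpow_mul hy0.le,
      hpq.symm.sub_one_mul_conj]
  have hxy : x * y = t * y ^ q := by
    rw [hxt, mul_assoc, ← Real.rpow_add_one (ne_of_gt hy0), sub_add_cancel]
  rw [hxp, hxy] at h
  have hkey : t ^ p / p + 1 / q = t := by
    have h2 : (t ^ p / p + 1 / q) * y ^ q = t * y ^ q := by rw [← h]; ring
    exact mul_right_cancel₀ (ne_of_gt hyq0) h2
  by_cases hteq : t = 1
  · rw [hxp, hteq, Real.one_rpow, one_mul]
  · exfalso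
    have hb : 1 + p * (t - 1) < (1 + (t - 1)) ^ p :=
      one_add_mul_self_lt_rpow_one_add (by linarith) (by intro hh; exact hteq (by linarith)) hpq.lt
    rw [add_sub_cancel] at hb
    have htp : t ^ p = p * (t - 1/q) := by
      have h3 : t ^ p / p = t - 1/q := by linarith
      rw [div_eq_iff (ne_of_gt hp0)] at h3
      rw [h3]; ring
    rw [htp] at hb
    have e : p * (t - 1/q) = p * t - p / q := by ring
    rw [e, hpq.div_conj_eq_sub_one] at hb
    linarith

/-- closed form of the minimizer of
`w ↦ −wᵀv + (c/2)‖w‖_q² + b‖w‖₁` for `1 < q < 2` (the gradient of the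
conjugate of `g(w) = (c/2)‖w‖_q² + b‖w‖₁`). -/
theorem qnorm_l1_prox_formula (d : ℕ) (q c b : ℝ)
    (hq1 : 1 < q) (hq2 : q < 2) (hc : 0 < c) (hb : 0 ≤ b)
    (v : Fin d → ℝ)
    (f : (Fin d → ℝ) → ℝ)
    (hf : ∀ w, f w = -(∑ i, w i * v i)
        + (c / 2) * ((∑ i, |w i| ^ q) ^ (1 / q)) ^ (2:ℕ)
        + b * ∑ i, |w i|)
    (wstar : Fin d → ℝ) (hmin : ∀ w, f wstar ≤ f w)
    (a : ℝ)
    (ha : a = ((1 / c) * ((∑ i ∈ Finset.univ.filter fun i => b < |v i|,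
        (|v i| - b) ^ (q / (q - 1))) ^ ((q - 2) / q))) ^ (q - 1)) :
    ∀ i, (|v i| ≤ b → wstar i = 0) ∧
      (b < |v i| → wstar i = Real.sign (v i) * (a * (|v i| - b)) ^ (1 / (q - 1))) := by
  have hq0 : (0:ℝ) < q := by linarith
  have hq1' : (0:ℝ) < q - 1 := by linarith
  set p : ℝ := q / (q - 1) with hpdef
  have hp1 : 1 < p := by rw [hpdef, lt_div_iff₀ hq1']; linarith
  have hp0 : (0:ℝ) < p := by linarith
  have hpq : Real.HolderConjugate p q := by
    refine Real.holderConjugate_iff.2 ⟨hp1, ?_⟩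
    rw [hpdef, inv_div]
    field_simp
    ring
  have hqp : (q - 1) * p = q := hpq.symm.sub_one_mul_conj
  have h1p : (1:ℝ)/p = (q-1)/q := by rw [hpdef, one_div_div]
  set T : Finset (Fin d) := Finset.univ.filter fun i => b < |v i| with hTdef
  set u : Fin d → ℝ := fun i => max (|v i| - b) 0 with hudef
  have hu0 : ∀ i, 0 ≤ u i := fun i => le_max_right _ _
  have huT : ∀ i ∈ T, u i = |v i| - b := by
    intro i hi
    have : b < |v i| := (Finset.mem_filter.1 hi).2
    exact max_eq_left (by linarith)
  have huT' : ∀ i ∉ T, u i = 0 := by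
    intro i hi
    have : ¬ b < |v i| := fun h => hi (Finset.mem_filter.2 ⟨Finset.mem_univ i, h⟩)
    exact max_eq_right (by push_neg at this; linarith)
  set S : ℝ := ∑ i ∈ T, (|v i| - b) ^ p with hSdef
  have hSuniv : ∑ i, u i ^ p = S := by
    rw [hSdef, ← Finset.sum_subset (Finset.subset_univ T) (fun x _ hx => by
        rw [huT' x hx, Real.zero_rpow (ne_of_gt hp0)])]
    exact Finset.sum_congr rfl fun i hi => by rw [huT i hi]
  have hS0 : 0 ≤ S := Finset.sum_nonneg fun i hi =>
    Real.rpow_nonneg (by have := (Finset.mem_filter.1 hi).2; linarith) _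
  -- key: nonnegativity of bracket 1 terms, for any w
  have hB1 : ∀ (w : Fin d → ℝ) i, 0 ≤ |w i| * u i - w i * v i + b * |w i| := by
    intro w i
    have h1 : w i * v i ≤ |w i| * |v i| := by
      rw [← abs_mul]; exact le_abs_self _
    have h2 : |v i| ≤ u i + b := by
      have : |v i| - b ≤ u i := le_max_left _ _
      linarith
    have h3 : |w i| * |v i| ≤ |w i| * (u i + b) :=
      mul_le_mul_of_nonneg_left h2 (abs_nonneg _)
    nlinarith
  rcases eq_or_lt_of_le hS0 with hS | hS
  · -- degenerate case S = 0 : all |v i| ≤ b, wstar = 0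
    have hTv : ∀ i, |v i| ≤ b := by
      intro i
      by_contra hlt
      push_neg at hlt
      have hiT : i ∈ T := Finset.mem_filter.2 ⟨Finset.mem_univ i, hlt⟩
      have h0 := (Finset.sum_eq_zero_iff_of_nonneg (fun j hj =>
        Real.rpow_nonneg (by have := (Finset.mem_filter.1 hj).2; linarith) p)).1 hS.symm i hiT
      have := (Real.rpow_eq_zero (by linarith) (ne_of_gt hp0)).1 h0
      linarith
    have hf0 : f 0 = 0 := by
      rw [hf]
      simp only [Pi.zero_apply, zero_mul, Finset.sum_const_zero, abs_zero, neg_zero,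
        mul_zero, add_zero, zero_add, Real.zero_rpow (ne_of_gt hq0)]
      rw [Real.zero_rpow (by positivity : (1:ℝ)/q ≠ 0)]
      norm_num
    have hfl : f wstar ≤ 0 := by rw [← hf0]; exact hmin 0
    set N : ℝ := (∑ i, |wstar i| ^ q) ^ (1 / q) with hNdef
    have hNnn : 0 ≤ N := Real.rpow_nonneg
      (Finset.sum_nonneg fun i _ => Real.rpow_nonneg (abs_nonneg _) q) _
    have hsum_le : ∑ i, wstar i * v i ≤ b * ∑ i, |wstar i| := by
      rw [Finset.mul_sum]
      refine Finset.sum_le_sum fun i _ => ?_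
      have h1 : wstar i * v i ≤ |wstar i| * |v i| := by
        rw [← abs_mul]; exact le_abs_self _
      have h2 : |wstar i| * |v i| ≤ |wstar i| * b :=
        mul_le_mul_of_nonneg_left (hTv i) (abs_nonneg _)
      calc wstar i * v i ≤ |wstar i| * b := le_trans h1 h2
        _ = b * |wstar i| := mul_comm _ _
    have hN0 : N ^ (2:ℕ) = 0 := by
      have hfw := hf wstar
      rw [← hNdef] at hfw
      nlinarith [sq_nonneg N]
    have hNz : N = 0 := by
      exact pow_eq_zero_iff two_ne_zero |>.1 hN0
    have hsz : ∑ i, |wstar i| ^ q = 0 := by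
      rw [hNdef] at hNz
      exact (Real.rpow_eq_zero (Finset.sum_nonneg fun i _ =>
        Real.rpow_nonneg (abs_nonneg _) q) (by positivity)).1 hNz
    intro i
    refine ⟨fun _ => ?_, fun hlt => absurd hlt (not_lt.2 (hTv i))⟩
    have := (Finset.sum_eq_zero_iff_of_nonneg (fun j _ =>
      Real.rpow_nonneg (abs_nonneg (wstar j)) q)).1 hsz i (Finset.mem_univ i)
    have := (Real.rpow_eq_zero (abs_nonneg _) (ne_of_gt hq0)).1 this
    exact abs_eq_zero.1 this
  · -- main case S > 0
    have hSne : S ≠ 0 := ne_of_gt hS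
    set U : ℝ := S ^ ((q-1)/q) with hUdef
    have hU : 0 < U := Real.rpow_pos_of_pos hS _
    have hUp : U ^ p = S := by
      rw [hUdef, ← Real.rpow_mul hS0, div_mul_eq_mul_div, hqp, div_self (ne_of_gt hq0),
        Real.rpow_one]
    set β : ℝ := 1 / c * S ^ ((q - 2) / q) with hβdef
    have hβ : 0 < β := mul_pos (by positivity) (Real.rpow_pos_of_pos hS _)
    have ha1 : a ^ ((1:ℝ)/(q-1)) = β := by
      rw [ha, ← Real.rpow_mul hβ.le, mul_one_div, div_self (ne_of_gt hq1'), Real.rpow_one]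
    have hapos : 0 < a := by rw [ha]; exact Real.rpow_pos_of_pos hβ _
    have haq : a ^ p = β ^ q := by
      rw [ha, ← Real.rpow_mul hβ.le, hqp]
    set wbar : Fin d → ℝ := fun i =>
      if b < |v i| then Real.sign (v i) * (a * (|v i| - b)) ^ ((1:ℝ)/(q-1)) else 0 with hwbardef
    have hwbar0 : ∀ i ∉ T, wbar i = 0 := by
      intro i hi
      have hni : ¬ b < |v i| := fun h => hi (Finset.mem_filter.2 ⟨Finset.mem_univ i, h⟩)
      simp only [hwbardef, if_neg hni]
    have hmpos : ∀ i ∈ T, 0 < (a * (|v i| - b)) ^ ((1:ℝ)/(q-1)) := by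
      intro i hi
      have hvb := (Finset.mem_filter.1 hi).2
      exact Real.rpow_pos_of_pos (by nlinarith) _
    have hvne : ∀ i ∈ T, v i ≠ 0 := by
      intro i hi h0
      have hvb := (Finset.mem_filter.1 hi).2
      rw [h0, abs_zero] at hvb; linarith
    have habs : ∀ i ∈ T, |wbar i| = (a * (|v i| - b)) ^ ((1:ℝ)/(q-1)) := by
      intro i hi
      have hni : b < |v i| := (Finset.mem_filter.1 hi).2
      rcases lt_or_gt_of_ne (hvne i hi) with hv | hv
      · simp only [hwbardef, if_pos hni, Real.sign_of_neg hv]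
        rw [neg_one_mul, abs_neg, abs_of_pos (hmpos i hi)]
      · simp only [hwbardef, if_pos hni, Real.sign_of_pos hv]
        rw [one_mul, abs_of_pos (hmpos i hi)]
    have hwv : ∀ i ∈ T, wbar i * v i = (a * (|v i| - b)) ^ ((1:ℝ)/(q-1)) * |v i| := by
      intro i hi
      have hni : b < |v i| := (Finset.mem_filter.1 hi).2
      rcases lt_or_gt_of_ne (hvne i hi) with hv | hv
      · simp only [hwbardef, if_pos hni, Real.sign_of_neg hv]
        rw [abs_of_neg hv]; ring
      · simp only [hwbardef, if_pos hni, Real.sign_of_pos hv]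
        rw [abs_of_pos hv]; ring
    have hres : ∀ (g : Fin d → ℝ), (∀ i ∉ T, g i = 0) → ∑ i, g i = ∑ i ∈ T, g i := by
      intro g hg
      rw [← Finset.sum_subset (Finset.subset_univ T) (fun x _ hx => hg x hx)]
    have hsum1 : ∑ i, |wbar i| ^ q = β ^ q * S := by
      rw [hres _ (fun i hi => by rw [hwbar0 i hi, abs_zero, Real.zero_rpow (ne_of_gt hq0)]),
        hSdef, Finset.mul_sum]
      refine Finset.sum_congr rfl fun i hi => ?_
      have hvb := (Finset.mem_filter.1 hi).2
      have hub : 0 < |v i| - b := by linarith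
      rw [habs i hi, ← Real.rpow_mul (by positivity : (0:ℝ) ≤ a * (|v i| - b)),
        one_div_mul_eq_div, ← hpdef, Real.mul_rpow hapos.le hub.le, haq]
    have habs_sum : ∑ i, |wbar i| = ∑ i ∈ T, (a * (|v i| - b)) ^ ((1:ℝ)/(q-1)) := by
      rw [hres _ (fun i hi => by rw [hwbar0 i hi, abs_zero])]
      exact Finset.sum_congr rfl habs
    have hsum2 : ∑ i, wbar i * v i = β * S + b * ∑ i, |wbar i| := by
      rw [hres (fun i => wbar i * v i) (fun i hi => by show wbar i * v i = 0; rw [hwbar0 i hi, zero_mul]),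
        habs_sum, hSdef, Finset.mul_sum, Finset.mul_sum, ← Finset.sum_add_distrib]
      refine Finset.sum_congr rfl fun i hi => ?_
      have hvb := (Finset.mem_filter.1 hi).2
      have hub : 0 < |v i| - b := by linarith
      rw [hwv i hi]
      have hmu : (a * (|v i| - b)) ^ ((1:ℝ)/(q-1)) * (|v i| - b) = β * (|v i| - b) ^ p := by
        rw [Real.mul_rpow hapos.le hub.le, ha1, mul_assoc, ← Real.rpow_add_one (ne_of_gt hub)]
        congr 2
        rw [hpdef]; field_simp; ring
      calc (a * (|v i| - b)) ^ ((1:ℝ)/(q-1)) * |v i|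
          = (a * (|v i| - b)) ^ ((1:ℝ)/(q-1)) * (|v i| - b)
            + b * (a * (|v i| - b)) ^ ((1:ℝ)/(q-1)) := by ring
        _ = β * (|v i| - b) ^ p + b * (a * (|v i| - b)) ^ ((1:ℝ)/(q-1)) := by rw [hmu]
    have hNbar : (∑ i, |wbar i| ^ q) ^ ((1:ℝ)/q) = β * S ^ ((1:ℝ)/q) := by
      rw [hsum1, Real.mul_rpow (by positivity) hS0, ← Real.rpow_mul hβ.le, mul_one_div,
        div_self (ne_of_gt hq0), Real.rpow_one]
    have hSS : S ^ ((q - 2) / q) * S = U * U := by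
      nth_rewrite 2 [← Real.rpow_one S]
      rw [← Real.rpow_add hS, hUdef, ← Real.rpow_add hS]
      congr 1
      field_simp
      ring
    have hβS : β * S = U * U / c := by
      rw [hβdef, mul_assoc, hSS]; ring
    have hβγU : β * S ^ ((1:ℝ)/q) = U / c := by
      rw [hβdef, hUdef, mul_assoc, ← Real.rpow_add hS, ← add_div]
      have he : q - 2 + 1 = q - 1 := by ring
      rw [he]; ring
    have hfwbar : f wbar = -(U * U) / (2*c) := by
      rw [hf, hsum2, hNbar, hβγU, hβS]
      field_simp
      ring
    have hdecomp : ∀ w : Fin d → ℝ, f w + U * U / (2*c) =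
        (∑ i, (|w i| * u i - w i * v i + b * |w i|))
        + (U * ((∑ i, |w i| ^ q) ^ ((1:ℝ)/q)) - ∑ i, |w i| * u i)
        + (c * ((∑ i, |w i| ^ q) ^ ((1:ℝ)/q)) - U)^2 / (2*c) := by
      intro w
      have hsplit : ∑ i, (|w i| * u i - w i * v i + b * |w i|)
          = (∑ i, |w i| * u i) - (∑ i, w i * v i) + b * ∑ i, |w i| := by
        rw [Finset.sum_add_distrib, Finset.sum_sub_distrib, Finset.mul_sum]
      rw [hf w, hsplit]
      field_simp
      ring
    have hHolder : ∀ w : Fin d → ℝ, ∑ i, |w i| * u i ≤ U * ((∑ i, |w i| ^ q) ^ ((1:ℝ)/q)) := by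
      intro w
      have h := Real.inner_le_Lp_mul_Lq_of_nonneg (s := Finset.univ) (f := u)
        (g := fun i => |w i|) hpq (fun i _ => hu0 i) (fun i _ => abs_nonneg (w i))
      rw [hSuniv] at h
      calc ∑ i, |w i| * u i = ∑ i, u i * |w i| :=
            Finset.sum_congr rfl fun i _ => mul_comm _ _
        _ ≤ S ^ ((1:ℝ)/p) * ((∑ i, |w i| ^ q) ^ ((1:ℝ)/q)) := h
        _ = U * ((∑ i, |w i| ^ q) ^ ((1:ℝ)/q)) := by rw [h1p, hUdef]
    set N : ℝ := (∑ i, |wstar i| ^ q) ^ ((1:ℝ) / q) with hNdef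
    have hNnn : 0 ≤ N :=
      Real.rpow_nonneg (Finset.sum_nonneg fun i _ => Real.rpow_nonneg (abs_nonneg _) q) _
    have hfwle : f wstar ≤ -(U*U)/(2*c) := by rw [← hfwbar]; exact hmin wbar
    have hd := hdecomp wstar
    have hB1sum : 0 ≤ ∑ i, (|wstar i| * u i - wstar i * v i + b * |wstar i|) :=
      Finset.sum_nonneg fun i _ => hB1 wstar i
    have hB2w : 0 ≤ U * N - ∑ i, |wstar i| * u i := by
      have := hHolder wstar; rw [← hNdef] at this; linarith
    have hB3w : 0 ≤ (c * N - U)^2 / (2*c) := by positivity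
    have htot : (∑ i, (|wstar i| * u i - wstar i * v i + b * |wstar i|))
        + (U * N - ∑ i, |wstar i| * u i) + (c * N - U)^2 / (2*c) ≤ 0 := by
      rw [← hd]
      have hneg : -(U*U)/(2*c) = -(U * U / (2*c)) := by ring
      rw [hneg] at hfwle
      linarith
    have hz1 : ∑ i, (|wstar i| * u i - wstar i * v i + b * |wstar i|) = 0 := by linarith
    have hz2 : U * N - ∑ i, |wstar i| * u i = 0 := by linarith
    have hz3 : (c * N - U)^2 / (2*c) = 0 := by linarith
    have hcN : c * N = U := by
      rcases div_eq_zero_iff.1 hz3 with h2 | h2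
      · have := pow_eq_zero_iff two_ne_zero |>.1 h2
        linarith
      · linarith
    have hNpos : 0 < N := by nlinarith
    have hNq : N ^ q = ∑ i, |wstar i| ^ q := by
      rw [hNdef, ← Real.rpow_mul (Finset.sum_nonneg fun i _ =>
        Real.rpow_nonneg (abs_nonneg _) q), one_div_mul_cancel (ne_of_gt hq0), Real.rpow_one]
    have hsum_uw : ∑ i, |wstar i| * u i = U * N := by linarith
    have hsz : ∑ i, (u i / U) ^ p = 1 := by
      have he : ∀ i : Fin d, (u i / U) ^ p = u i ^ p / U ^ p :=
        fun i => Real.div_rpow (hu0 i) hU.le p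
      simp only [he]
      rw [← Finset.sum_div, hSuniv, hUp, div_self hSne]
    have hsy : ∑ i, (|wstar i| / N) ^ q = 1 := by
      have he : ∀ i : Fin d, (|wstar i| / N) ^ q = |wstar i| ^ q / N ^ q :=
        fun i => Real.div_rpow (abs_nonneg _) hNnn q
      simp only [he]
      rw [← Finset.sum_div, ← hNq, div_self (ne_of_gt (Real.rpow_pos_of_pos hNpos q))]
    have hsyz : ∑ i, (u i / U) * (|wstar i| / N) = 1 := by
      have he : ∀ i : Fin d, (u i / U) * (|wstar i| / N) = (u i * |wstar i|) / (U * N) :=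
        fun i => div_mul_div_comm _ _ _ _
      simp only [he]
      rw [← Finset.sum_div,
        show ∑ i, u i * |wstar i| = U * N by
          rw [← hsum_uw]; exact Finset.sum_congr rfl fun i _ => mul_comm _ _,
        div_self (ne_of_gt (mul_pos hU hNpos))]
    have htnn : ∀ i ∈ (Finset.univ : Finset (Fin d)), (0:ℝ) ≤ (u i / U) ^ p / p + (|wstar i| / N) ^ q / q
        - (u i / U) * (|wstar i| / N) := by
      intro i _
      have := Real.young_inequality_of_nonneg (div_nonneg (hu0 i) hU.le)
        (div_nonneg (abs_nonneg (wstar i)) hNnn) hpq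
      linarith
    have hts : ∑ i, ((u i / U) ^ p / p + (|wstar i| / N) ^ q / q
        - (u i / U) * (|wstar i| / N)) = 0 := by
      rw [Finset.sum_sub_distrib, Finset.sum_add_distrib, ← Finset.sum_div, ← Finset.sum_div,
        hsz, hsy, hsyz]
      have := hpq.inv_add_inv_eq_one
      rw [inv_eq_one_div, inv_eq_one_div] at this
      linarith
    have hyoung : ∀ i, (u i / U) ^ p = (|wstar i| / N) ^ q := by
      intro i
      have h0 := (Finset.sum_eq_zero_iff_of_nonneg htnn).1 hts i (Finset.mem_univ i)
      exact young_eq_aux hpq (div_nonneg (hu0 i) hU.le)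
        (div_nonneg (abs_nonneg _) hNnn) (by linarith)
    intro i
    constructor
    · intro hvb
      have hui : u i = 0 := max_eq_right (by simp; linarith)
      have h1 := hyoung i
      rw [hui, zero_div, Real.zero_rpow (ne_of_gt hp0)] at h1
      have h2 := (Real.rpow_eq_zero (div_nonneg (abs_nonneg _) hNnn)
        (ne_of_gt hq0)).1 h1.symm
      rcases div_eq_zero_iff.1 h2 with h3 | h3
      · exact abs_eq_zero.1 h3
      · exact absurd h3 (ne_of_gt hNpos)
    · intro hvb
      have hiT : i ∈ T := Finset.mem_filter.2 ⟨Finset.mem_univ i, hvb⟩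
      have hub : 0 < |v i| - b := by linarith
      have hui : u i = |v i| - b := huT i hiT
      have hz0 : (0:ℝ) ≤ u i / U := div_nonneg (hu0 i) hU.le
      have hy0 : (0:ℝ) ≤ |wstar i| / N := div_nonneg (abs_nonneg _) hNnn
      have hy : |wstar i| / N = (u i / U) ^ ((1:ℝ)/(q-1)) := by
        calc |wstar i| / N = ((|wstar i| / N) ^ q) ^ ((1:ℝ)/q) := by
              rw [← Real.rpow_mul hy0, mul_one_div, div_self (ne_of_gt hq0), Real.rpow_one]
          _ = ((u i / U) ^ p) ^ ((1:ℝ)/q) := by rw [hyoung i]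
          _ = (u i / U) ^ ((1:ℝ)/(q-1)) := by
              rw [← Real.rpow_mul hz0]
              congr 1
              rw [hpdef]; field_simp
      have habs_w : |wstar i| = N * (u i / U) ^ ((1:ℝ)/(q-1)) := by
        rw [div_eq_iff (ne_of_gt hNpos)] at hy
        rw [hy]; ring
      have hUκ : U / U ^ ((1:ℝ)/(q-1)) = S ^ ((q-2)/q) := by
        have h1 : U / U ^ ((1:ℝ)/(q-1)) = U ^ (1 - (1:ℝ)/(q-1)) := by
          rw [Real.rpow_sub hU, Real.rpow_one]
        rw [h1, hUdef, ← Real.rpow_mul hS0]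
        congr 1
        field_simp
        ring
      have hNU : N = U / c := by rw [← hcN]; field_simp
      have hmagn : N * (u i / U) ^ ((1:ℝ)/(q-1)) = (a * (|v i| - b)) ^ ((1:ℝ)/(q-1)) := by
        rw [hui, Real.div_rpow hub.le hU.le, Real.mul_rpow hapos.le hub.le, ha1, hNU, hβdef,
          ← hUκ]
        ring
      have hM : |wstar i| = (a * (|v i| - b)) ^ ((1:ℝ)/(q-1)) := habs_w.trans hmagn
      have hterm1 := (Finset.sum_eq_zero_iff_of_nonneg (fun j _ => hB1 wstar j)).1 hz1 i
        (Finset.mem_univ i)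
      have hwv_eq : wstar i * v i = |wstar i| * |v i| := by
        rw [hui] at hterm1
        have he : |wstar i| * (|v i| - b) = |wstar i| * |v i| - |wstar i| * b := by ring
        have he2 : b * |wstar i| = |wstar i| * b := by ring
        linarith [hterm1, he]
      have hv0 : v i ≠ 0 := by intro h0; rw [h0, abs_zero] at hvb; linarith
      rcases lt_or_gt_of_ne hv0 with hv | hv
      · rw [Real.sign_of_neg hv]
        rw [abs_of_neg hv] at hwv_eq
        have h2 : (wstar i + |wstar i|) * v i = 0 := by rw [add_mul, hwv_eq]; ring
        rcases mul_eq_zero.1 h2 with h3 | h3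
        · have : wstar i = -|wstar i| := by linarith
          rw [this, hM]; ring
        · exact absurd h3 hv0
      · rw [Real.sign_of_pos hv]
        rw [abs_of_pos hv] at hwv_eq
        have h3 : wstar i = |wstar i| := mul_right_cancel₀ hv0 hwv_eq
        rw [h3, hM]; ring
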